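/- Let x, x' : [0,∞) → ℝ be right-continuous with left limits (RCLL) with x(0) = x'(0) = 0, and define y(t) := sup_{0 ≤ s ≤ t}(−x(s)), y'(t) := sup_{0 ≤ s ≤ t}(−x'(s)), z := x + y, z' := x' + y'. Then for every t ≥ 0: |y(t) − y'(t)| ≤ sup_{0 ≤ s ≤ t} |x(s) − x'(s)| and |z(t) − z'(t)| ≤ 2 · sup_{0 ≤ s ≤ t} |x(s) − x'(s)|. In particular, the Skorokhod map F(x) := (y, z) is Lipschitz continuous with respect to the uniform norm on every interval [0, t]. -/

import Mathlib

open Set Filter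

/-- An RCLL function is bounded above on `[0, t]`. -/
lemma rcll_bddAbove (f : ℝ → ℝ)
    (hrc : ∀ s : ℝ, 0 ≤ s → ContinuousWithinAt f (Ici s) s)
    (hll : ∀ s : ℝ, 0 < s → ∃ l : ℝ, Tendsto f (nhdsWithin s (Iio s)) (nhds l))
    (t : ℝ) : BddAbove (f '' Icc 0 t) := by
  have hK : IsCompact (Icc (0:ℝ) t) := isCompact_Icc
  refine hK.induction_on (p := fun U => BddAbove (f '' U)) (by simp)
    (fun s u hsu hu => (hu.mono (image_mono (f := f) hsu)))
    (fun s u hs hu => by show BddAbove (f '' (s ∪ u)); rw [image_union]; exact hs.union hu) ?_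
  intro s hs
  rcases eq_or_lt_of_le hs.1 with h0 | hpos
  · -- s = 0 : use right continuity only
    subst h0
    have hten : Tendsto f (nhdsWithin 0 (Ici 0)) (nhds (f 0)) := hrc 0 le_rfl
    have hev : {u | f u ≤ f 0 + 1} ∈ nhdsWithin (0:ℝ) (Ici 0) := by
      filter_upwards [hten (Iio_mem_nhds (lt_add_one (f 0)))] with u hu
      exact le_of_lt hu
    refine ⟨{u | f u ≤ f 0 + 1}, ?_, ⟨f 0 + 1, ?_⟩⟩
    · exact nhdsWithin_mono 0 (Icc_subset_Ici_self) hev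
    · rintro b ⟨u, hu, rfl⟩; exact hu
  · -- s > 0 : use right continuity and left limit
    obtain ⟨l, hl⟩ := hll s hpos
    set M := max (f s + 1) (l + 1) with hM
    have hevR : {u | f u ≤ M} ∈ nhdsWithin s (Ici s) := by
      filter_upwards [(hrc s hs.1) (Iio_mem_nhds (lt_add_one (f s)))] with u hu
      exact le_trans (le_of_lt hu) (le_max_left _ _)
    have hevL : {u | f u ≤ M} ∈ nhdsWithin s (Iio s) := by
      filter_upwards [hl (Iio_mem_nhds (lt_add_one l))] with u hu
      exact le_trans (le_of_lt hu) (le_max_right _ _)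
    have hev : {u | f u ≤ M} ∈ nhds s := by
      rw [← nhdsLT_sup_nhdsGE s, mem_sup]
      exact ⟨hevL, hevR⟩
    refine ⟨{u | f u ≤ M}, nhdsWithin_le_nhds hev, ⟨M, ?_⟩⟩
    rintro b ⟨u, hu, rfl⟩; exact hu

/-- Lipschitz continuity of the Skorokhod map: with
`y(t) = sup_{0 ≤ s ≤ t} (−x(s))`, `z = x + y`, and similarly `(y', z')` for `x'`,
one has `|y(t) − y'(t)| ≤ sup_{0 ≤ s ≤ t} |x(s) − x'(s)|` and
`|z(t) − z'(t)| ≤ 2 sup_{0 ≤ s ≤ t} |x(s) − x'(s)|` for every `t ≥ 0`. -/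
theorem skorokhod_map_lipschitz (x x' : ℝ → ℝ)
    (hxrc : ∀ t : ℝ, 0 ≤ t → ContinuousWithinAt x (Ici t) t)
    (hxll : ∀ t : ℝ, 0 < t → ∃ l : ℝ, Tendsto x (nhdsWithin t (Iio t)) (nhds l))
    (hx'rc : ∀ t : ℝ, 0 ≤ t → ContinuousWithinAt x' (Ici t) t)
    (hx'll : ∀ t : ℝ, 0 < t → ∃ l : ℝ, Tendsto x' (nhdsWithin t (Iio t)) (nhds l))
    (hx0 : x 0 = 0) (hx'0 : x' 0 = 0)
    (y y' z z' : ℝ → ℝ)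
    (hy : ∀ t : ℝ, 0 ≤ t → y t = sSup ((fun s => - x s) '' Icc 0 t))
    (hy' : ∀ t : ℝ, 0 ≤ t → y' t = sSup ((fun s => - x' s) '' Icc 0 t))
    (hz : ∀ t : ℝ, 0 ≤ t → z t = x t + y t)
    (hz' : ∀ t : ℝ, 0 ≤ t → z' t = x' t + y' t) :
    ∀ t : ℝ, 0 ≤ t →
      |y t - y' t| ≤ sSup ((fun s => |x s - x' s|) '' Icc 0 t) ∧
      |z t - z' t| ≤ 2 * sSup ((fun s => |x s - x' s|) '' Icc 0 t) := by
  intro t ht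
  set D := sSup ((fun s => |x s - x' s|) '' Icc 0 t) with hD
  -- boundedness of the three sup sets
  have hBabs : BddAbove ((fun s => |x s - x' s|) '' Icc 0 t) := by
    refine rcll_bddAbove _ (fun s hs => ((hxrc s hs).sub (hx'rc s hs)).abs)
      (fun s hs => ?_) t
    obtain ⟨l, hl⟩ := hxll s hs
    obtain ⟨l', hl'⟩ := hx'll s hs
    exact ⟨|l - l'|, (hl.sub hl').abs⟩
  have hBA : BddAbove ((fun s => - x s) '' Icc 0 t) := by
    refine rcll_bddAbove _ (fun s hs => (hxrc s hs).neg) (fun s hs => ?_) t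
    obtain ⟨l, hl⟩ := hxll s hs
    exact ⟨-l, hl.neg⟩
  have hBB : BddAbove ((fun s => - x' s) '' Icc 0 t) := by
    refine rcll_bddAbove _ (fun s hs => (hx'rc s hs).neg) (fun s hs => ?_) t
    obtain ⟨l, hl⟩ := hx'll s hs
    exact ⟨-l, hl.neg⟩
  have h0mem : (0:ℝ) ∈ Icc (0:ℝ) t := left_mem_Icc.mpr ht
  have hneA : ((fun s => - x s) '' Icc 0 t).Nonempty := ⟨-x 0, 0, h0mem, rfl⟩
  have hneB : ((fun s => - x' s) '' Icc 0 t).Nonempty := ⟨-x' 0, 0, h0mem, rfl⟩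
  have hD0 : ∀ s ∈ Icc (0:ℝ) t, |x s - x' s| ≤ D :=
    fun s hs => le_csSup hBabs ⟨s, hs, rfl⟩
  -- key one-sided inequalities
  have key : ∀ (f g : ℝ → ℝ), (∀ s ∈ Icc (0:ℝ) t, |f s - g s| ≤ D) →
      BddAbove ((fun s => - g s) '' Icc 0 t) →
      ((fun s => - f s) '' Icc 0 t).Nonempty →
      sSup ((fun s => - f s) '' Icc 0 t) ≤ sSup ((fun s => - g s) '' Icc 0 t) + D := by
    intro f g hfg hBg hne
    refine csSup_le hne ?_
    rintro a ⟨s, hs, rfl⟩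
    show -f s ≤ _
    have h1 : -g s ≤ sSup ((fun s => - g s) '' Icc 0 t) := le_csSup hBg ⟨s, hs, rfl⟩
    have h2 : g s - f s ≤ |f s - g s| := by
      rw [abs_sub_comm]; exact le_abs_self _
    have := le_trans h2 (hfg s hs)
    linarith
  have hxx' : ∀ s ∈ Icc (0:ℝ) t, |x' s - x s| ≤ D := by
    intro s hs; rw [abs_sub_comm]; exact hD0 s hs
  have k1 := key x x' hD0 hBB hneA
  have k2 := key x' x hxx' hBA hneB
  have hyy' : |y t - y' t| ≤ D := by
    rw [hy t ht, hy' t ht, abs_sub_le_iff]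
    constructor <;> linarith
  have hxt : |x t - x' t| ≤ D := hD0 t (right_mem_Icc.mpr ht)
  refine ⟨hyy', ?_⟩
  rw [hz t ht, hz' t ht]
  have : x t + y t - (x' t + y' t) = (x t - x' t) + (y t - y' t) := by ring
  rw [this]
  calc |(x t - x' t) + (y t - y' t)| ≤ |x t - x' t| + |y t - y' t| := abs_add_le _ _
    _ ≤ D + D := add_le_add hxt hyy'
    _ = 2 * D := by ring
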